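/- G-BP is the special case of G-MF with the delta product distribution, hence G-MF dominates G-BP: Let q⁰ be the product distribution with q⁰_{ab}(0)=1 and q⁰_{ab}(1)=0 for every edge. For any gauge transformation 𝒢 with f_{a,𝒢}(0,0,…,0)>0 for all a∈V, the G-MF objective at (q⁰,𝒢) equals the G-BP objective ∑_{a∈V} log f_{a,𝒢}(0,0,…,0). Consequently, the supremum of the G-MF objective over feasible pairs (q,𝒢) is at least the supremum of the G-BP objective over feasible gauges 𝒢 (feasible meaning the gauge constraints G_{ab}ᵀG_{ba}=I hold and all transformed factors are nonnegative). -/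
import Mathlib


/- STATEMENT 4: G-BP is the special case of G-MF with the delta product
distribution, hence G-MF dominates G-BP.  Forney-style GM encoding as in
Statement 0; the G-MF objective of a product distribution
`q : E → Fin 2 → ℝ` and gauge `𝒢` is
`∑_a ∑_{x_a} q_a(x_a) log f_{a,𝒢}(x_a) − ∑_e ∑_s q e s log (q e s)`,
with the first term encoded as the expectation over the full product
distribution (conventions `0·log 0 = 0`).  The suprema in the domination
statement are taken in `EReal`. -/

open Matrix

/-- The gauge transformed factor `f_{a,𝒢}`. -/
noncomputable def gaugedFactor {V E : Type*} [Fintype E] [DecidableEq V] [DecidableEq E]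
    (ends : E → V × V) (f : V → (E → Fin 2) → ℝ)
    (𝒢 : E → Bool → Matrix (Fin 2) (Fin 2) ℝ) (a : V) (x : E → Fin 2) : ℝ :=
  ∑ y : E → Fin 2, f a y *
    ∏ e : E,
      if a = (ends e).1 then 𝒢 e false (x e) (y e)
      else if a = (ends e).2 then 𝒢 e true (x e) (y e)
      else if x e = y e then 1 else 0

/-- The G-MF objective of a product distribution `q` and a gauge `𝒢`. -/
noncomputable def gmfObjective {V E : Type*} [Fintype V] [Fintype E]
    [DecidableEq V] [DecidableEq E]
    (ends : E → V × V) (f : V → (E → Fin 2) → ℝ)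
    (q : E → Fin 2 → ℝ) (𝒢 : E → Bool → Matrix (Fin 2) (Fin 2) ℝ) : ℝ :=
  (∑ a : V, ∑ x : E → Fin 2,
      (∏ e : E, q e (x e)) * Real.log (gaugedFactor ends f 𝒢 a x))
    - ∑ e : E, ∑ s : Fin 2, q e s * Real.log (q e s)

/-- **G-BP = G-MF at the delta product distribution, and G-MF dominates
G-BP.**  The delta product distribution is `q⁰_{ab}(0)=1`, `q⁰_{ab}(1)=0`.
Feasibility means the gauge constraints hold and all transformed factors are
nonnegative. -/

lemma delta_gmf {V E : Type*} [Fintype V] [Fintype E] [DecidableEq V] [DecidableEq E]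
    (ends : E → V × V) (f : V → (E → Fin 2) → ℝ)
    (𝒢 : E → Bool → Matrix (Fin 2) (Fin 2) ℝ) :
    gmfObjective ends f (fun _ s => if s = 0 then 1 else 0) 𝒢
      = ∑ a : V, Real.log (gaugedFactor ends f 𝒢 a (fun _ => 0)) := by
  unfold gmfObjective
  have key : ∀ a : V, ∑ x : E → Fin 2,
      (∏ e : E, if x e = 0 then (1:ℝ) else 0) * Real.log (gaugedFactor ends f 𝒢 a x)
      = Real.log (gaugedFactor ends f 𝒢 a fun _ => 0) := by
    intro a
    rw [Finset.sum_eq_single (fun _ => (0 : Fin 2))]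
    · simp
    · intro x _ hx
      obtain ⟨e, he⟩ := Function.ne_iff.mp hx
      rw [Finset.prod_eq_zero (Finset.mem_univ e) (by simp [he]), zero_mul]
    · simp
  simp only [key]
  simp [Fin.sum_univ_two]

theorem gmf_dominates_gbp
    {V E : Type*} [Fintype V] [Fintype E] [DecidableEq V] [DecidableEq E]
    (ends : E → V × V) (f : V → (E → Fin 2) → ℝ) :
    (∀ 𝒢 : E → Bool → Matrix (Fin 2) (Fin 2) ℝ,
      (∀ a : V, 0 < gaugedFactor ends f 𝒢 a (fun _ => 0)) →
      gmfObjective ends f (fun _ s => if s = 0 then 1 else 0) 𝒢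
        = ∑ a : V, Real.log (gaugedFactor ends f 𝒢 a (fun _ => 0))) ∧
    sSup {r : EReal | ∃ 𝒢 : E → Bool → Matrix (Fin 2) (Fin 2) ℝ,
        (∀ e, (𝒢 e false)ᵀ * 𝒢 e true = 1) ∧
        (∀ a x, 0 ≤ gaugedFactor ends f 𝒢 a x) ∧
        r = ((∑ a : V, Real.log (gaugedFactor ends f 𝒢 a (fun _ => 0)) : ℝ) : EReal)}
      ≤ sSup {r : EReal | ∃ (q : E → Fin 2 → ℝ)
          (𝒢 : E → Bool → Matrix (Fin 2) (Fin 2) ℝ),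
        (∀ e s, 0 ≤ q e s) ∧ (∀ e, ∑ s : Fin 2, q e s = 1) ∧
        (∀ e, (𝒢 e false)ᵀ * 𝒢 e true = 1) ∧
        (∀ a x, 0 ≤ gaugedFactor ends f 𝒢 a x) ∧
        r = ((gmfObjective ends f q 𝒢 : ℝ) : EReal)} := by
  constructor
  · intro 𝒢 _
    exact delta_gmf ends f 𝒢
  · apply sSup_le_sSup
    rintro r ⟨𝒢, h1, h2, rfl⟩
    refine ⟨fun _ s => if s = 0 then 1 else 0, 𝒢, ?_, ?_, h1, h2, ?_⟩
    · intro e s; dsimp only; split_ifs <;> norm_num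
    · intro e; simp [Fin.sum_univ_two]
    · rw [delta_gmf]
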